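/- Convergence of the QVI solutions as the switching cost vanishes: for each c > 0, let u^c be the solution of the QVI with switching cost c. Then c₁ ≥ c₂ > 0 implies u^{c₁} ≤ u^{c₂} componentwise, and there exists ū ∈ ℝ^N such that for every i ∈ I the component (u^c)^i converges to ū as c → 0⁺ with (u^c)^i ≤ ū for all c > 0, and the vector 𝐮 = (ū,…,ū) ∈ ℝ^{N×d} satisfies the limiting HJB-type problem: min_{i∈I} F_i(𝐮)_l = 0 for all l ∈ {1,…,N}. -/

import Mathlib

open Filter Topology

noncomputable section

/-- A monotone system with constant `γ`: whenever `u i l - v i l` is the (nonnegative)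
maximum of all differences, `F u i l - F v i l ≥ γ (u i l - v i l)`. -/
def IsMonotoneSystem {N d : ℕ} (γ : ℝ)
    (F : (Fin d → Fin N → ℝ) → Fin d → Fin N → ℝ) : Prop :=
  ∀ u v : Fin d → Fin N → ℝ, ∀ i : Fin d, ∀ l : Fin N,
    (∀ (j : Fin d) (k : Fin N), u j k - v j k ≤ u i l - v i l) →
    0 ≤ u i l - v i l →
    γ * (u i l - v i l) ≤ F u i l - F v i l

/-- The intervention operator `(M_i u)_l = max_{j ≠ i} (u j l - c)`. -/
def Mop {N d : ℕ} (c : ℝ) (u : Fin d → Fin N → ℝ) (i : Fin d) (l : Fin N) : ℝ :=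
  ⨆ j : {j : Fin d // j ≠ i}, (u j l - c)

/-- The sup-norm `‖u‖ = max_{i,l} |u i l|`. -/
def supNorm {N d : ℕ} (u : Fin d → Fin N → ℝ) : ℝ :=
  ⨆ p : Fin d × Fin N, |u p.1 p.2|

/-- A penalty function: continuous, non-decreasing, vanishing on `(-∞,0]` and
positive on `(0,∞)`. -/
def IsPenaltyFunction (π : ℝ → ℝ) : Prop :=
  Continuous π ∧ Monotone π ∧ (∀ y : ℝ, y ≤ 0 → π y = 0) ∧ (∀ y : ℝ, 0 < y → 0 < π y)

/-- A concave system: each `F_i` is concave (componentwise). -/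
def IsConcaveSystem {N d : ℕ}
    (F : (Fin d → Fin N → ℝ) → Fin d → Fin N → ℝ) : Prop :=
  ∀ (i : Fin d) (u v : Fin d → Fin N → ℝ) (θ : ℝ), 0 ≤ θ → θ ≤ 1 → ∀ l : Fin N,
    θ * F u i l + (1 - θ) * F v i l ≤ F (fun j k => θ * u j k + (1 - θ) * v j k) i l

namespace QVIAux

variable {N d : ℕ}

lemma mop_nonempty (hd : 2 ≤ d) (i : Fin d) : Nonempty {j : Fin d // j ≠ i} := by
  obtain ⟨j, hj⟩ := Fintype.exists_ne_of_one_lt_card (by simp; omega) i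
  exact ⟨⟨j, hj⟩⟩

lemma mop_le (hd : 2 ≤ d) {c : ℝ} {u : Fin d → Fin N → ℝ} {i : Fin d} {l : Fin N} {x : ℝ}
    (h : ∀ j : Fin d, j ≠ i → u j l - c ≤ x) : Mop c u i l ≤ x := by
  have : Nonempty {j : Fin d // j ≠ i} := mop_nonempty hd i
  exact ciSup_le fun j => h j.1 j.2

lemma le_mop {c : ℝ} {u : Fin d → Fin N → ℝ} {i j : Fin d} (hj : j ≠ i) (l : Fin N) :
    u j l - c ≤ Mop c u i l := by
  unfold Mop
  exact le_ciSup (f := fun j : {j : Fin d // j ≠ i} => u j.1 l - c)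
    (Finite.bddAbove_range _) ⟨j, hj⟩

/-- Comparison principle. -/
lemma comparison (hd : 2 ≤ d) {γ : ℝ} (hγ : 0 < γ)
    {F : (Fin d → Fin N → ℝ) → Fin d → Fin N → ℝ}
    (hFmono : IsMonotoneSystem γ F) {c : ℝ} (hc : 0 < c)
    {u v : Fin d → Fin N → ℝ}
    (hu1 : ∀ i l, 0 ≤ F u i l) (hu2 : ∀ i l, Mop c u i l ≤ u i l)
    (hv : ∀ i l, F v i l ≤ 0 ∨ v i l ≤ Mop c v i l) :
    ∀ i l, v i l ≤ u i l := by
  by_contra h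
  push_neg at h
  obtain ⟨i0, l0, h0⟩ := h
  have : Nonempty (Fin d) := ⟨i0⟩
  have : Nonempty (Fin N) := ⟨l0⟩
  obtain ⟨p, hp⟩ := Finite.exists_max (fun p : Fin d × Fin N => v p.1 p.2 - u p.1 p.2)
  set m := v p.1 p.2 - u p.1 p.2 with hm
  have hmpos : 0 < m := lt_of_lt_of_le (by linarith) (hp (i0, l0))
  set l := p.2 with hl
  have step : ∀ i : Fin d, v i l - u i l = m →
      ∃ j : Fin d, (v j l - u j l = m) ∧ v i l + c ≤ v j l := by
    intro i hi
    rcases hv i l with hF | hM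
    · exfalso
      have hmax : ∀ (j : Fin d) (k : Fin N), v j k - u j k ≤ v i l - u i l := by
        intro j k; rw [hi]; exact hp (j, k)
      have := hFmono v u i l hmax (by rw [hi]; exact hmpos.le)
      have hFu := hu1 i l
      rw [hi] at this
      nlinarith
    · have : Nonempty {j : Fin d // j ≠ i} := mop_nonempty hd i
      obtain ⟨j, hj⟩ := Finite.exists_max (fun j : {j : Fin d // j ≠ i} => v j.1 l)
      have h1 : Mop c v i l ≤ v j.1 l - c := ciSup_le fun j' => by
        have : v j'.1 l ≤ v j.1 l := hj j'; show v j'.1 l - c ≤ v j.1 l - c; linarith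
      have h2 : v i l + c ≤ v j.1 l := by linarith [hM.trans h1]
      have h3 : u j.1 l - c ≤ u i l := (le_mop j.2 l).trans (hu2 i l)
      have h4 : m ≤ v j.1 l - u j.1 l := by rw [← hi]; linarith
      exact ⟨j.1, le_antisymm (hp (j.1, l)) h4, h2⟩
  -- iterate the step to get an infinite strictly increasing chain in a finite set
  let T := {i : Fin d // v i l - u i l = m}
  have hstep' : ∀ t : T, ∃ t' : T, v t.1 l + c ≤ v t'.1 l := by
    rintro ⟨i, hi⟩
    obtain ⟨j, hj1, hj2⟩ := step i hi
    exact ⟨⟨j, hj1⟩, hj2⟩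
  choose f hf using hstep'
  let g : ℕ → T := fun n => f^[n] ⟨p.1, rfl⟩
  have hmono : StrictMono (fun n => v (g n).1 l) := by
    apply strictMono_nat_of_lt_succ
    intro n
    have he : g (n + 1) = f (g n) := Function.iterate_succ_apply' f n _
    have := hf (g n)
    rw [he]
    linarith
  have hinj : Function.Injective g := fun a b hab => hmono.injective (by rw [hab])
  obtain ⟨a, b, hab, he⟩ := Finite.exists_ne_map_eq_of_infinite g
  exact hab (hinj he)

lemma sol_props (_hd : 2 ≤ d) {F : (Fin d → Fin N → ℝ) → Fin d → Fin N → ℝ} {c : ℝ}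
    {w : Fin d → Fin N → ℝ}
    (h : ∀ i l, min (F w i l) (w i l - Mop c w i l) = 0) :
    (∀ i l, 0 ≤ F w i l) ∧ (∀ i l, Mop c w i l ≤ w i l) ∧
      (∀ i l, 0 < F w i l → w i l = Mop c w i l) := by
  refine ⟨fun i l => (h i l) ▸ min_le_left _ _, fun i l => by linarith [(h i l) ▸ min_le_right (F w i l) (w i l - Mop c w i l)], fun i l hF => ?_⟩
  rcases min_eq_iff.mp (h i l) with h1 | h1
  · linarith [h1.1]
  · linarith [h1.1]

end QVIAux

open QVIAux


/-- Convergence of the QVI solutions as the switching cost vanishes: monotonicity in `c`,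
and convergence to a solution of the limiting HJB-type problem. -/
theorem qvi_vanishing_cost_convergence {N d : ℕ} (hN : 1 ≤ N) (hd : 2 ≤ d)
    (γ : ℝ) (hγ : 0 < γ)
    (F : (Fin d → Fin N → ℝ) → Fin d → Fin N → ℝ)
    (hFcont : Continuous F) (hFmono : IsMonotoneSystem γ F)
    (U : ℝ → Fin d → Fin N → ℝ)
    (hU : ∀ c : ℝ, 0 < c → ∀ i l, min (F (U c) i l) (U c i l - Mop c (U c) i l) = 0) :
    (∀ c₁ c₂ : ℝ, 0 < c₂ → c₂ ≤ c₁ → ∀ i l, U c₁ i l ≤ U c₂ i l) ∧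
    ∃ ubar : Fin N → ℝ,
      (∀ c : ℝ, 0 < c → ∀ i l, U c i l ≤ ubar l) ∧
      (∀ i l, Filter.Tendsto (fun c => U c i l) (nhdsWithin 0 (Set.Ioi 0)) (nhds (ubar l))) ∧
      (∀ l, (⨅ i : Fin d, F (fun _ => ubar) i l) = 0) := by
  have hdN : Nonempty (Fin d) := ⟨⟨0, by omega⟩⟩
  have hNN : Nonempty (Fin N) := ⟨⟨0, by omega⟩⟩
  -- solution properties
  have hP := fun (c : ℝ) (hc : 0 < c) => sol_props hd (hU c hc)
  -- Part 1: monotonicity in c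
  have part1 : ∀ c₁ c₂ : ℝ, 0 < c₂ → c₂ ≤ c₁ → ∀ i l, U c₁ i l ≤ U c₂ i l := by
    intro c₁ c₂ hc₂ hle
    have hc₁ : 0 < c₁ := lt_of_lt_of_le hc₂ hle
    refine comparison hd hγ hFmono hc₁ (hP c₂ hc₂).1 (fun i l => ?_) (fun i l => ?_)
    · refine le_trans (mop_le hd fun j hj => ?_) ((hP c₂ hc₂).2.1 i l)
      exact le_trans (by linarith) (le_mop hj l)
    · rcases min_eq_iff.mp (hU c₁ hc₁ i l) with h1 | h1
      · exact Or.inl h1.1.le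
      · exact Or.inr (by linarith [h1.1])
  -- uniform bounds
  set B : ℝ := ⨆ p : Fin d × Fin N, |F (fun _ _ => 0) p.1 p.2| with hBdef
  have hB : ∀ i l, |F (fun _ _ => (0:ℝ)) i l| ≤ B := by
    intro i l
    rw [hBdef]
    exact le_ciSup (f := fun p : Fin d × Fin N => |F (fun _ _ => (0:ℝ)) p.1 p.2|)
      (Finite.bddAbove_range _) (i, l)
  have hB0 : 0 ≤ B := le_trans (abs_nonneg _) (hB (Classical.arbitrary _) (Classical.arbitrary _))
  set K : ℝ := B / γ with hKdef
  have hK0 : 0 ≤ K := div_nonneg hB0 hγ.le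
  have hγK : γ * K = B := by rw [hKdef]; field_simp [hγ.ne']
  have hFK : ∀ i l, 0 ≤ F (fun _ _ => K) i l := by
    intro i l
    have h1 := hFmono (fun _ _ => K) (fun _ _ => 0) i l (fun j k => le_refl _)
      (by simpa using hK0)
    simp only [sub_zero] at h1
    have h2 := (abs_le.mp (hB i l)).1
    linarith
  have hFmK : ∀ i l, F (fun _ _ => -K) i l ≤ 0 := by
    intro i l
    have h1 := hFmono (fun _ _ => 0) (fun _ _ => -K) i l (fun j k => le_refl _)
      (by simpa using hK0)
    simp only [zero_sub, neg_neg, sub_neg_eq_add, zero_add] at h1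
    have h2 := (abs_le.mp (hB i l)).2
    linarith
  have hub : ∀ c : ℝ, 0 < c → ∀ i l, U c i l ≤ K := by
    intro c hc
    refine comparison hd hγ hFmono hc hFK
      (fun i l => mop_le hd fun j hj => show K - c ≤ K by linarith)
      (fun i l => ?_)
    rcases min_eq_iff.mp (hU c hc i l) with h1 | h1
    · exact Or.inl h1.1.le
    · exact Or.inr (by linarith [h1.1])
  have hlb : ∀ c : ℝ, 0 < c → ∀ i l, -K ≤ U c i l := by
    intro c hc
    exact comparison hd hγ hFmono hc (hP c hc).1 (hP c hc).2.1 (fun i l => Or.inl (hFmK i l))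
  -- neighbor estimate
  have hnb : ∀ c : ℝ, 0 < c → ∀ i j : Fin d, ∀ l, U c i l ≤ U c j l + c := by
    intro c hc i j l
    rcases eq_or_ne i j with rfl | hij
    · linarith
    · have := (le_mop hij l).trans ((hP c hc).2.1 j l)
      linarith
  -- define ubar
  set i₀ : Fin d := Classical.arbitrary _ with hi₀
  set ubar : Fin N → ℝ := fun l => sSup ((fun c => U c i₀ l) '' Set.Ioi (0:ℝ)) with hubar
  have hSne : ∀ l, ((fun c => U c i₀ l) '' Set.Ioi (0:ℝ)).Nonempty :=
    fun l => ⟨U 1 i₀ l, ⟨1, by norm_num, rfl⟩⟩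
  have hSbdd : ∀ l, BddAbove ((fun c => U c i₀ l) '' Set.Ioi (0:ℝ)) := by
    intro l
    refine ⟨K, ?_⟩
    rintro x ⟨c, hc, rfl⟩
    exact hub c hc i₀ l
  have hle0 : ∀ c : ℝ, 0 < c → ∀ l, U c i₀ l ≤ ubar l :=
    fun c hc l => le_csSup (hSbdd l) ⟨c, hc, rfl⟩
  -- upper bound by ubar
  have hbound : ∀ c : ℝ, 0 < c → ∀ i l, U c i l ≤ ubar l := by
    intro c hc i l
    refine le_of_forall_pos_le_add fun ε hε => ?_
    set c' : ℝ := min c ε with hc'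
    have hc'pos : 0 < c' := lt_min hc hε
    have h1 : U c i l ≤ U c' i l := part1 c c' hc'pos (min_le_left _ _) i l
    have h2 : U c' i l ≤ U c' i₀ l + c' := hnb c' hc'pos i i₀ l
    have h3 := hle0 c' hc'pos l
    have : c' ≤ ε := min_le_right _ _
    linarith
  -- tendsto
  have htend : ∀ i l, Tendsto (fun c => U c i l) (nhdsWithin 0 (Set.Ioi 0)) (nhds (ubar l)) := by
    intro i l
    rw [Metric.tendsto_nhdsWithin_nhds]
    intro ε hε
    obtain ⟨x, ⟨c₀, hc₀, rfl⟩, hx⟩ := exists_lt_of_lt_csSup (hSne l) (show ubar l - ε/2 < ubar l by linarith)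
    refine ⟨min c₀ (ε/2), lt_min hc₀ (by linarith), fun c hc hdist => ?_⟩
    have hcpos : 0 < c := hc
    rw [Real.dist_eq, sub_zero, abs_of_pos hcpos] at hdist
    have hcc₀ : c ≤ c₀ := le_of_lt (lt_of_lt_of_le hdist (min_le_left _ _))
    have hcε : c < ε/2 := lt_of_lt_of_le hdist (min_le_right _ _)
    have h1 : U c₀ i₀ l ≤ U c i₀ l := part1 c₀ c hcpos hcc₀ i₀ l
    have h2 : U c i₀ l ≤ U c i l + c := hnb c hcpos i₀ i l
    have h3 : U c i l ≤ ubar l := hbound c hcpos i l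
    rw [Real.dist_eq, abs_lt]
    exact ⟨by linarith, by linarith⟩
  -- limit equation
  set ub : Fin d → Fin N → ℝ := fun _ => ubar with hub2
  have htendfull : Tendsto (fun c => U c) (nhdsWithin 0 (Set.Ioi 0)) (nhds ub) :=
    tendsto_pi_nhds.mpr fun i => tendsto_pi_nhds.mpr fun l => htend i l
  have hFU : ∀ i l, Tendsto (fun c => F (U c) i l) (nhdsWithin 0 (Set.Ioi 0)) (nhds (F ub i l)) := by
    intro i l
    have h1 : Tendsto (fun c => F (U c)) (nhdsWithin 0 (Set.Ioi 0)) (nhds (F ub)) :=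
      (hFcont.tendsto ub).comp htendfull
    exact tendsto_pi_nhds.mp (tendsto_pi_nhds.mp h1 i) l
  have hge : ∀ i l, 0 ≤ F ub i l := by
    intro i l
    refine ge_of_tendsto (hFU i l) (eventually_nhdsWithin_of_forall fun c hc => ?_)
    exact (hP c hc).1 i l
  have hex : ∀ l, ∃ i, F ub i l ≤ 0 := by
    intro l
    by_contra h
    push_neg at h
    have hev : ∀ᶠ c in nhdsWithin 0 (Set.Ioi 0), ∀ i, 0 < F (U c) i l :=
      Filter.eventually_all.mpr fun i => (hFU i l).eventually (eventually_gt_nhds (h i))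
    obtain ⟨c, hc, hpos⟩ := (hev.and (eventually_mem_nhdsWithin)).exists
    obtain ⟨i', hi'⟩ := Finite.exists_max (fun i : Fin d => U c i l)
    have hc0 : (0:ℝ) < c := hpos
    have heq : U c i' l = Mop c (U c) i' l := (hP c hc0).2.2 i' l (hc i')
    have : Mop c (U c) i' l ≤ U c i' l - c :=
      mop_le hd fun j hj => by linarith [hi' j]
    linarith
  refine ⟨part1, ubar, fun c hc i l => hbound c hc i l, htend, fun l => ?_⟩
  obtain ⟨i, hi⟩ := hex l
  exact le_antisymm ((ciInf_le (Finite.bddBelow_range _) i).trans hi) (le_ciInf fun i => hge i l)
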